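/- Suppose 5β + 2λ < 1 and β < 1/20. If u and v lie in the same connected component of the sparsified graph G̃, then dist_G(u, v) ≤ 2, i.e., u and v have a common neighbor in the original graph G. -/

import Mathlib

open Finset Classical

noncomputable section

set_option linter.unusedSectionVars false

variable {V : Type*} [Fintype V] [DecidableEq V]

/-- Closed neighborhood of `v` in `G` (each vertex is its own neighbor). -/
def closedNbhd (G : SimpleGraph V) (v : V) : Finset V :=
  insert v (G.neighborFinset v)

/-- Degree `d(v) = |N(v)|` (closed neighborhoods). -/
def deg (G : SimpleGraph V) (v : V) : ℕ := (closedNbhd G v).card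

/-- `u` and `v` are in agreement: `|N(u) △ N(v)| < β·max(d(u), d(v))`. -/
def Agree (β : ℝ) (G : SimpleGraph V) (u v : V) : Prop :=
  ((symmDiff (closedNbhd G u) (closedNbhd G v)).card : ℝ)
    < β * max (deg G u : ℝ) (deg G v : ℝ)

/-- The graph after Line 1: discard all edges whose endpoints are not in agreement. -/
def agreeGraph (β : ℝ) (G : SimpleGraph V) : SimpleGraph V where
  Adj u v := G.Adj u v ∧ Agree β G u v
  symm := ⟨by
    intro a b h
    refine ⟨h.1.symm, ?_⟩
    have := h.2
    unfold Agree at *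
    rwa [symmDiff_comm, max_comm] at this⟩
  loopless := ⟨fun a h => G.loopless.irrefl a h.1⟩

/-- A vertex is light if it lost more than a `λ`-fraction of its neighbors
when passing from `G` to the agreement graph. -/
def Light (β lam : ℝ) (G : SimpleGraph V) (v : V) : Prop :=
  (deg G v : ℝ) - (deg (agreeGraph β G) v : ℝ) > lam * (deg G v : ℝ)

/-- A vertex is heavy if it is not light. -/
def Heavy (β lam : ℝ) (G : SimpleGraph V) (v : V) : Prop := ¬ Light β lam G v

/-- The sparsified graph `G̃`: additionally discard all edges between two
light vertices. -/
def sparsified (β lam : ℝ) (G : SimpleGraph V) : SimpleGraph V where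
  Adj u v := (agreeGraph β G).Adj u v ∧ (Heavy β lam G u ∨ Heavy β lam G v)
  symm := ⟨fun a b h => ⟨h.1.symm, h.2.symm⟩⟩
  loopless := ⟨fun a h => (agreeGraph β G).loopless.irrefl a h.1⟩

/-! ### Auxiliary lemmas -/

lemma symmDiff_card_tri (s t u : Finset V) :
    (symmDiff s u).card ≤ (symmDiff s t).card + (symmDiff t u).card :=
  le_trans (Finset.card_le_card (symmDiff_triangle s t u)) (Finset.card_union_le _ _)

lemma subset_union_symmDiff (s t : Finset V) : s ⊆ t ∪ symmDiff s t := by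
  intro a ha
  by_cases h : a ∈ t
  · exact Finset.mem_union_left _ h
  · exact Finset.mem_union_right _ (Finset.mem_symmDiff.mpr (Or.inl ⟨ha, h⟩))

lemma card_symmDiff_id (s t : Finset V) :
    (symmDiff s t).card + (s ∩ t).card + (s ∩ t).card = s.card + t.card := by
  rw [symmDiff_def, Finset.sup_eq_union, Finset.card_union_of_disjoint disjoint_sdiff_sdiff]
  have h1 := Finset.card_sdiff_add_card_inter s t
  have h2 := Finset.card_sdiff_add_card_inter t s
  rw [Finset.inter_comm t s] at h2
  omega

lemma self_mem_closedNbhd (G : SimpleGraph V) (v : V) : v ∈ closedNbhd G v :=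
  Finset.mem_insert_self _ _

lemma one_le_deg (G : SimpleGraph V) (v : V) : 1 ≤ deg G v :=
  Finset.card_pos.mpr ⟨v, self_mem_closedNbhd G v⟩

lemma mem_closedNbhd_iff {G : SimpleGraph V} {v w : V} :
    w ∈ closedNbhd G v ↔ w = v ∨ G.Adj v w := by
  simp [closedNbhd, SimpleGraph.mem_neighborFinset]

lemma sp_adj {G : SimpleGraph V} {β lam : ℝ} {x y : V}
    (h : (sparsified β lam G).Adj x y) : G.Adj x y := h.1.1

lemma sp_agree {G : SimpleGraph V} {β lam : ℝ} {x y : V}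
    (h : (sparsified β lam G).Adj x y) : Agree β G x y := h.1.2

lemma sp_heavy {G : SimpleGraph V} {β lam : ℝ} {x y : V}
    (h : (sparsified β lam G).Adj x y) : Heavy β lam G x ∨ Heavy β lam G y := h.2

lemma heavy_deg {G : SimpleGraph V} {β lam : ℝ} {v : V} (h : Heavy β lam G v) :
    (1 - lam) * (deg G v : ℝ) ≤ (deg (agreeGraph β G) v : ℝ) := by
  unfold Heavy Light at h
  push_neg at h
  linarith

lemma agree_closedNbhd_subset (G : SimpleGraph V) (β : ℝ) (v : V) :
    closedNbhd (agreeGraph β G) v ⊆ closedNbhd G v := by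
  intro w hw
  rcases mem_closedNbhd_iff.mp hw with h | h
  · exact mem_closedNbhd_iff.mpr (Or.inl h)
  · exact mem_closedNbhd_iff.mpr (Or.inr h.1)

/-- Basic bounds along one agreement edge. -/
lemma edge_bounds {G : SimpleGraph V} {β : ℝ} (hβ0 : 0 < β) (hβ1 : β < 1)
    {x z : V} (hA : Agree β G x z) :
    ((symmDiff (closedNbhd G x) (closedNbhd G z)).card : ℝ)
      < β * max (deg G x : ℝ) (deg G z : ℝ) ∧
    (1 - β) * max ((deg G x : ℝ)) (deg G z : ℝ) ≤ (deg G z : ℝ) := by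
  unfold Agree at hA
  refine ⟨hA, ?_⟩
  have hsub := subset_union_symmDiff (closedNbhd G x) (closedNbhd G z)
  have h1 : deg G x ≤ deg G z + (symmDiff (closedNbhd G x) (closedNbhd G z)).card := by
    calc deg G x ≤ (closedNbhd G z ∪ symmDiff (closedNbhd G x) (closedNbhd G z)).card :=
          Finset.card_le_card hsub
      _ ≤ _ := Finset.card_union_le _ _
  have h1' : (deg G x : ℝ) ≤ (deg G z : ℝ)
      + ((symmDiff (closedNbhd G x) (closedNbhd G z)).card : ℝ) := by exact_mod_cast h1
  rcases max_cases ((deg G x : ℝ)) ((deg G z : ℝ)) with ⟨hm, hle⟩ | ⟨hm, hlt⟩ <;>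
    rw [hm] at hA ⊢
  · nlinarith
  · have : (0:ℝ) ≤ (deg G z : ℝ) := Nat.cast_nonneg _
    nlinarith

/-- Chain lemma: bounds along a walk of length at most 4 in the sparsified graph. -/
lemma chain {G : SimpleGraph V} {β lam : ℝ} (hβ0 : 0 < β) (hβ : β < 1/20) :
    ∀ {x y : V} (p : (sparsified β lam G).Walk x y), p.length ≤ 4 →
    (1-β)^4 * ((symmDiff (closedNbhd G x) (closedNbhd G y)).card : ℝ)
      ≤ (p.length : ℝ) * β * (deg G y : ℝ) ∧
    (1-β)^p.length * (deg G x : ℝ) ≤ (deg G y : ℝ) := by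
  intro x y p
  induction p with
  | nil =>
      intro _
      constructor
      · simp [symmDiff_self]
      · simp
  | @cons a b c e p ih =>
      intro hlen
      rw [SimpleGraph.Walk.length_cons] at hlen
      obtain ⟨ih1, ih2⟩ := ih (by omega)
      have hb : (0:ℝ) < 1 - β := by linarith
      obtain ⟨e1, e2⟩ := edge_bounds hβ0 (by linarith) (sp_agree e)
      set n := p.length with hn
      set s1 : ℝ := ((symmDiff (closedNbhd G a) (closedNbhd G b)).card : ℝ) with hs1
      set s2 : ℝ := ((symmDiff (closedNbhd G b) (closedNbhd G c)).card : ℝ) with hs2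
      set M : ℝ := max ((deg G a : ℝ)) ((deg G b : ℝ)) with hM
      have hs1nn : 0 ≤ s1 := Nat.cast_nonneg _
      have hpn : (0:ℝ) ≤ (1-β)^n := pow_nonneg hb.le n
      have hpn1 : (0:ℝ) ≤ (1-β)^(n+1) := pow_nonneg hb.le (n+1)
      have hle4 : (1-β)^4 ≤ (1-β)^(n+1) :=
        pow_le_pow_of_le_one hb.le (by linarith) (by omega)
      -- (1-β)^(n+1) * M ≤ deg c
      have hM1 : (1-β)^(n+1) * M ≤ (deg G c : ℝ) := by
        have c1 : (1-β)^n * ((1-β) * M) ≤ (1-β)^n * (deg G b : ℝ) :=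
          mul_le_mul_of_nonneg_left e2 hpn
        calc (1-β)^(n+1) * M = (1-β)^n * ((1-β) * M) := by ring
          _ ≤ (1-β)^n * (deg G b : ℝ) := c1
          _ ≤ (deg G c : ℝ) := ih2
      -- (1-β)^4 * s1 ≤ β * deg c
      have key1 : (1-β)^4 * s1 ≤ β * (deg G c : ℝ) := by
        have c3 : (1-β)^(n+1) * s1 ≤ (1-β)^(n+1) * (β * M) :=
          mul_le_mul_of_nonneg_left e1.le hpn1
        have c4 : (1-β)^4 * s1 ≤ (1-β)^(n+1) * s1 :=
          mul_le_mul_of_nonneg_right hle4 hs1nn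
        have c5 : (1-β)^(n+1) * (β * M) = β * ((1-β)^(n+1) * M) := by ring
        have c6 : β * ((1-β)^(n+1) * M) ≤ β * (deg G c : ℝ) :=
          mul_le_mul_of_nonneg_left hM1 hβ0.le
        linarith
      constructor
      · have tri : ((symmDiff (closedNbhd G a) (closedNbhd G c)).card : ℝ) ≤ s1 + s2 := by
          have := symmDiff_card_tri (closedNbhd G a) (closedNbhd G b) (closedNbhd G c)
          rw [hs1, hs2]; exact_mod_cast this
        have c7 : (1-β)^4 * ((symmDiff (closedNbhd G a) (closedNbhd G c)).card : ℝ)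
            ≤ (1-β)^4 * (s1 + s2) :=
          mul_le_mul_of_nonneg_left tri (pow_nonneg hb.le 4)
        rw [SimpleGraph.Walk.length_cons]
        push_cast
        nlinarith [ih1]
      · rw [SimpleGraph.Walk.length_cons]
        have ha : (deg G a : ℝ) ≤ M := le_max_left _ _
        calc (1-β)^(n+1) * (deg G a : ℝ) ≤ (1-β)^(n+1) * M :=
              mul_le_mul_of_nonneg_left ha hpn1
          _ ≤ (deg G c : ℝ) := hM1

/-- Shortcut lemma: two heavy vertices within `G̃`-distance 4 are within distance 2. -/
lemma shortcut {G : SimpleGraph V} {β lam : ℝ}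
    (hβ0 : 0 < β) (hβ : β < 1/20) (hlam0 : 0 < lam) (hparams : 5 * β + 2 * lam < 1)
    {a b : V} (ha : Heavy β lam G a) (hb : Heavy β lam G b)
    (p : (sparsified β lam G).Walk a b) (hp : p.length ≤ 4) :
    ∃ q : (sparsified β lam G).Walk a b, q.length ≤ 2 := by
  have hb1 : (0:ℝ) < 1 - β := by linarith
  obtain ⟨hch, -⟩ := chain hβ0 hβ p hp
  have hq : (4:ℝ)/5 < (1-β)^4 := by nlinarith [sq_nonneg β, sq_nonneg (1-β)]
  have hdb : (1:ℝ) ≤ (deg G b : ℝ) := by exact_mod_cast one_le_deg G b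
  have hdb0 : (0:ℝ) ≤ (deg G b : ℝ) := by linarith
  have hda : (0:ℝ) ≤ (deg G a : ℝ) := Nat.cast_nonneg _
  have hs0 : (0:ℝ) ≤ ((symmDiff (closedNbhd G a) (closedNbhd G b)).card : ℝ) :=
    Nat.cast_nonneg _
  have hchain : (1-β)^4 * ((symmDiff (closedNbhd G a) (closedNbhd G b)).card : ℝ)
      ≤ 4 * β * (deg G b : ℝ) := by
    have hl : (p.length : ℝ) ≤ 4 := by exact_mod_cast hp
    nlinarith [mul_le_mul_of_nonneg_right hl (mul_nonneg hβ0.le hdb0)]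
  have h2lam : 5*β < 1 - 2*lam := by linarith
  have hs_lt : ((symmDiff (closedNbhd G a) (closedNbhd G b)).card : ℝ)
      < (1 - 2*lam) * (deg G b : ℝ) := by
    nlinarith [mul_le_mul_of_nonneg_right hq.le hs0,
      mul_nonneg (by linarith : (0:ℝ) ≤ 1/20 - β) hdb0,
      mul_lt_mul_of_pos_right (by linarith : 5*β < 1 - 2*lam) (by linarith : (0:ℝ) < (deg G b : ℝ))]
  -- counting
  set Na := closedNbhd G a with hNa
  set Nb := closedNbhd G b with hNb
  set Aa := closedNbhd (agreeGraph β G) a with hAa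
  set Ab := closedNbhd (agreeGraph β G) b with hAb
  have f1 : (Aa ∪ Ab).card + (Aa ∩ Ab).card = Aa.card + Ab.card :=
    Finset.card_union_add_card_inter _ _
  have f2 : (Aa ∪ Ab).card ≤ (Na ∪ Nb).card :=
    Finset.card_le_card (Finset.union_subset_union
      (agree_closedNbhd_subset G β a) (agree_closedNbhd_subset G β b))
  have f3 : (Na ∪ Nb).card + (Na ∩ Nb).card = deg G a + deg G b :=
    Finset.card_union_add_card_inter _ _
  have f4 : (symmDiff Na Nb).card + (Na ∩ Nb).card + (Na ∩ Nb).card = deg G a + deg G b :=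
    card_symmDiff_id _ _
  have f5a : (1 - lam) * (deg G a : ℝ) ≤ (Aa.card : ℝ) := heavy_deg ha
  have f5b : (1 - lam) * (deg G b : ℝ) ≤ (Ab.card : ℝ) := heavy_deg hb
  have hlam2 : (0:ℝ) < 1 - 2*lam := by linarith
  have hpos : 0 < (Aa ∩ Ab).card := by
    have f1' : ((Aa ∪ Ab).card : ℝ) + ((Aa ∩ Ab).card : ℝ) = (Aa.card : ℝ) + (Ab.card : ℝ) := by
      exact_mod_cast f1
    have f2' : ((Aa ∪ Ab).card : ℝ) ≤ ((Na ∪ Nb).card : ℝ) := by exact_mod_cast f2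
    have f3' : ((Na ∪ Nb).card : ℝ) + ((Na ∩ Nb).card : ℝ) = (deg G a : ℝ) + (deg G b : ℝ) := by
      exact_mod_cast f3
    have f4' : ((symmDiff Na Nb).card : ℝ) + ((Na ∩ Nb).card : ℝ) + ((Na ∩ Nb).card : ℝ)
        = (deg G a : ℝ) + (deg G b : ℝ) := by exact_mod_cast f4
    have : (0:ℝ) < ((Aa ∩ Ab).card : ℝ) := by nlinarith
    exact_mod_cast this
  obtain ⟨w, hw⟩ := Finset.card_pos.mp hpos
  have hwa : w ∈ Aa := (Finset.mem_inter.mp hw).1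
  have hwb : w ∈ Ab := (Finset.mem_inter.mp hw).2
  rcases mem_closedNbhd_iff.mp hwa with hwa' | hwa' <;>
    rcases mem_closedNbhd_iff.mp hwb with hwb' | hwb'
  · -- w = a and w = b
    subst hwa'; subst hwb'
    exact ⟨SimpleGraph.Walk.nil, by simp⟩
  · -- w = a, Adj b w
    subst hwa'
    have : (sparsified β lam G).Adj b w := ⟨hwb', Or.inl hb⟩
    exact ⟨SimpleGraph.Walk.cons this.symm SimpleGraph.Walk.nil, by simp⟩
  · -- Adj a w, w = b
    subst hwb'
    have : (sparsified β lam G).Adj a w := ⟨hwa', Or.inl ha⟩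
    exact ⟨SimpleGraph.Walk.cons this SimpleGraph.Walk.nil, by simp⟩
  · have h1 : (sparsified β lam G).Adj a w := ⟨hwa', Or.inl ha⟩
    have h2 : (sparsified β lam G).Adj b w := ⟨hwb', Or.inl hb⟩
    exact ⟨SimpleGraph.Walk.cons h1 (SimpleGraph.Walk.cons h2.symm SimpleGraph.Walk.nil),
      by simp⟩

/-- Normal-form lemma: every walk can be shortened to length ≤ 4. -/
lemma nf {G : SimpleGraph V} {β lam : ℝ}
    (hβ0 : 0 < β) (hβ : β < 1/20) (hlam0 : 0 < lam) (hparams : 5 * β + 2 * lam < 1) :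
    ∀ {x v : V} (p : (sparsified β lam G).Walk x v),
    ∃ q : (sparsified β lam G).Walk x v, q.length ≤ 4 := by
  intro x v p
  suffices h : x = v ∨ ∃ (h1 h2 : V), Heavy β lam G h1 ∧ Heavy β lam G h2 ∧
      (∃ q : (sparsified β lam G).Walk x h1, q.length ≤ 1) ∧
      (∃ q : (sparsified β lam G).Walk h1 h2, q.length ≤ 2) ∧
      (∃ q : (sparsified β lam G).Walk h2 v, q.length ≤ 1) by
    rcases h with rfl | ⟨h1, h2, _, _, ⟨q1, l1⟩, ⟨q2, l2⟩, ⟨q3, l3⟩⟩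
    · exact ⟨SimpleGraph.Walk.nil, by simp⟩
    · refine ⟨(q1.append q2).append q3, ?_⟩
      simp only [SimpleGraph.Walk.length_append]
      omega
  induction p with
  | nil => exact Or.inl rfl
  | @cons a b c e p ih =>
      rcases ih with rfl | ⟨h1, h2, hh1, hh2, ⟨q1, l1⟩, ⟨q2, l2⟩, ⟨q3, l3⟩⟩
      · -- edge a—c
        rcases sp_heavy e with hH | hH
        · exact Or.inr ⟨a, a, hH, hH, ⟨SimpleGraph.Walk.nil, by simp⟩,
            ⟨SimpleGraph.Walk.nil, by simp⟩,
            ⟨SimpleGraph.Walk.cons e SimpleGraph.Walk.nil, by simp⟩⟩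
        · exact Or.inr ⟨b, b, hH, hH,
            ⟨SimpleGraph.Walk.cons e SimpleGraph.Walk.nil, by simp⟩,
            ⟨SimpleGraph.Walk.nil, by simp⟩, ⟨SimpleGraph.Walk.nil, by simp⟩⟩
      · rcases sp_heavy e with hH | hH
        · -- a heavy: walk a → h2 of length ≤ 4, shortcut
          have pw : (sparsified β lam G).Walk a h2 := (SimpleGraph.Walk.cons e q1).append q2
          have hpw : ((SimpleGraph.Walk.cons e q1).append q2).length ≤ 4 := by
            simp only [SimpleGraph.Walk.length_append, SimpleGraph.Walk.length_cons]
            omega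
          obtain ⟨q', l'⟩ := shortcut hβ0 hβ hlam0 hparams hH hh2
            ((SimpleGraph.Walk.cons e q1).append q2) hpw
          exact Or.inr ⟨a, h2, hH, hh2, ⟨SimpleGraph.Walk.nil, by simp⟩, ⟨q', l'⟩, ⟨q3, l3⟩⟩
        · -- b heavy: walk b → h2 of length ≤ 3, shortcut
          have hpw : (q1.append q2).length ≤ 4 := by
            simp only [SimpleGraph.Walk.length_append]
            omega
          obtain ⟨q', l'⟩ := shortcut hβ0 hβ hlam0 hparams hH hh2 (q1.append q2) hpw
          exact Or.inr ⟨b, h2, hH, hh2,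
            ⟨SimpleGraph.Walk.cons e SimpleGraph.Walk.nil, by simp⟩, ⟨q', l'⟩, ⟨q3, l3⟩⟩

/-- if `5β + 2λ < 1` and `β < 1/20`, and `u`, `v` lie in the
same connected component of the sparsified graph `G̃`, then `dist_G(u,v) ≤ 2`,
i.e. `u` and `v` have a common (closed) neighbor in the original graph `G`. -/
theorem stmt6 (G : SimpleGraph V) (β lam : ℝ)
    (hβ0 : 0 < β) (hβ : β < 1 / 20) (hlam0 : 0 < lam)
    (hparams : 5 * β + 2 * lam < 1)
    (u v : V)
    (hreach : (sparsified β lam G).Reachable u v) :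
    G.dist u v ≤ 2 ∧ (closedNbhd G u ∩ closedNbhd G v).Nonempty := by
  obtain ⟨p⟩ := hreach
  obtain ⟨q, hq4⟩ := nf hβ0 hβ hlam0 hparams p
  obtain ⟨hch, -⟩ := chain hβ0 hβ q hq4
  set s : ℝ := ((symmDiff (closedNbhd G u) (closedNbhd G v)).card : ℝ) with hs
  have hb1 : (0:ℝ) < 1 - β := by linarith
  have hqpow : (4:ℝ)/5 < (1-β)^4 := by nlinarith [sq_nonneg β, sq_nonneg (1-β)]
  have hdv : (1:ℝ) ≤ (deg G v : ℝ) := by exact_mod_cast one_le_deg G v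
  have hlen : (q.length : ℝ) ≤ 4 := by exact_mod_cast hq4
  have hdv0 : (0:ℝ) ≤ (deg G v : ℝ) := by linarith
  have hs0 : (0:ℝ) ≤ s := Nat.cast_nonneg _
  have hs_lt : s < (deg G v : ℝ) := by
    nlinarith [mul_le_mul_of_nonneg_right hqpow.le hs0,
      mul_le_mul_of_nonneg_right hlen (mul_nonneg hβ0.le hdv0),
      mul_nonneg (by linarith : (0:ℝ) ≤ 1/20 - β) hdv0]
  -- the intersection is nonempty
  have hsub := subset_union_symmDiff (closedNbhd G v) (closedNbhd G u)
  have h1 : deg G v ≤ (closedNbhd G u ∩ closedNbhd G v).card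
      + (symmDiff (closedNbhd G u) (closedNbhd G v)).card := by
    have : closedNbhd G v ⊆ (closedNbhd G u ∩ closedNbhd G v)
        ∪ symmDiff (closedNbhd G u) (closedNbhd G v) := by
      intro a haa
      by_cases h : a ∈ closedNbhd G u
      · exact Finset.mem_union_left _ (Finset.mem_inter.mpr ⟨h, haa⟩)
      · exact Finset.mem_union_right _ (Finset.mem_symmDiff.mpr (Or.inr ⟨haa, h⟩))
    calc deg G v ≤ _ := Finset.card_le_card this
      _ ≤ _ := Finset.card_union_le _ _
  have hpos : 0 < (closedNbhd G u ∩ closedNbhd G v).card := by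
    have h1' : (deg G v : ℝ) ≤ ((closedNbhd G u ∩ closedNbhd G v).card : ℝ)
        + ((symmDiff (closedNbhd G u) (closedNbhd G v)).card : ℝ) := by
      exact_mod_cast h1
    rw [← hs] at h1'
    have : (0:ℝ) < ((closedNbhd G u ∩ closedNbhd G v).card : ℝ) := by linarith
    exact_mod_cast this
  obtain ⟨w, hw⟩ := Finset.card_pos.mp hpos
  refine ⟨?_, ⟨w, hw⟩⟩
  have hwu := (Finset.mem_inter.mp hw).1
  have hwv := (Finset.mem_inter.mp hw).2
  rcases mem_closedNbhd_iff.mp hwu with rfl | hadj1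
  · -- w = u; u ∈ closedNbhd G v
    rcases mem_closedNbhd_iff.mp hwv with rfl | hadj2
    · simp [SimpleGraph.dist_self]
    · have : G.dist w v ≤ 1 :=
        le_trans (SimpleGraph.dist_le (SimpleGraph.Walk.cons hadj2.symm SimpleGraph.Walk.nil))
          (by simp)
      omega
  · rcases mem_closedNbhd_iff.mp hwv with rfl | hadj2
    · have : G.dist u w ≤ 1 :=
        le_trans (SimpleGraph.dist_le (SimpleGraph.Walk.cons hadj1 SimpleGraph.Walk.nil))
          (by simp)
      omega
    · have : G.dist u v ≤ 2 := by
        have := SimpleGraph.dist_le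
          (SimpleGraph.Walk.cons hadj1 (SimpleGraph.Walk.cons hadj2.symm SimpleGraph.Walk.nil))
        simpa using this
      omega

end
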